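/- Let n, M, i be integers with n ≥ 2, M ≥ n, and M+n ≤ i ≤ M+2n−1. Let u₀, …, uₙ be the standard basis of ℝ^{n+1}. For n ≤ s ≤ 2n−1 let D_s = cone{u_{j+1} + u_j : s−n ≤ j ≤ n−1}, and let T_s : ℝ^{n+1} → ℝ^{n+1} be the diagonal linear map multiplying the j-th coordinate by the binomial coefficient C(i−j, i−s). Then the convex cone generated by the union of the sets T_s(D_s) over all integers s with i−M ≤ s ≤ 2n−1 equals the sum, over integers j with i−M−n+1 ≤ j ≤ n, of the cones cone{(i−j−M+1)·u_j + (i−j+1)·u_{j−1}, n·u_j + (i−j+1)·u_{j−1}}. -/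

import Mathlib

open Finset

/-- `nonnegSpan S` is the set of (finite) nonnegative real linear combinations of
elements of `S`, i.e. the convex cone generated by `S` (together with `0`). -/
def nonnegSpan {V : Type*} [AddCommMonoid V] [Module ℝ V] (S : Set V) : Set V :=
  { x | ∃ (k : ℕ) (c : Fin k → ℝ) (v : Fin k → V),
      (∀ t, 0 ≤ c t) ∧ (∀ t, v t ∈ S) ∧ x = ∑ t, c t • v t }

/-- The standard basis vector `u_j` of `ℝ^{n+1}`. -/
def stdb (n : ℕ) (j : Fin (n + 1)) : Fin (n + 1) → ℝ := Pi.single j 1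

section NS
variable {V : Type*} [AddCommMonoid V] [Module ℝ V]

lemma ns_zero_mem (S : Set V) : (0:V) ∈ nonnegSpan S :=
  ⟨0, (fun _ => 0), Fin.elim0, fun t => le_refl _, fun t => t.elim0, by simp⟩

lemma ns_subset (S : Set V) : S ⊆ nonnegSpan S := fun x hx =>
  ⟨1, fun _ => 1, fun _ => x, fun _ => zero_le_one, fun _ => hx, by simp⟩

lemma ns_smul_mem {S : Set V} {c : ℝ} (hc : 0 ≤ c) {x : V} (hx : x ∈ nonnegSpan S) :
    c • x ∈ nonnegSpan S := by
  obtain ⟨k, co, v, h1, h2, rfl⟩ := hx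
  refine ⟨k, fun t => c * co t, v, fun t => mul_nonneg hc (h1 t), h2, ?_⟩
  rw [Finset.smul_sum]
  exact Finset.sum_congr rfl fun t _ => (smul_smul c (co t) (v t))

lemma ns_add_mem {S : Set V} {x y : V} (hx : x ∈ nonnegSpan S) (hy : y ∈ nonnegSpan S) :
    x + y ∈ nonnegSpan S := by
  obtain ⟨k, c, v, hc, hv, rfl⟩ := hx
  obtain ⟨l, d, w, hd, hw, rfl⟩ := hy
  refine ⟨k + l, Fin.append c d, Fin.append v w, ?_, ?_, ?_⟩
  · intro t
    induction t using Fin.addCases with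
    | left p => simpa [Fin.append_left] using hc p
    | right p => simpa [Fin.append_right] using hd p
  · intro t
    induction t using Fin.addCases with
    | left p => simpa [Fin.append_left] using hv p
    | right p => simpa [Fin.append_right] using hw p
  · rw [Fin.sum_univ_add]
    simp [Fin.append_left, Fin.append_right]

lemma ns_sum_mem {S : Set V} {ι : Type*} (F : Finset ι) (f : ι → V)
    (h : ∀ j ∈ F, f j ∈ nonnegSpan S) : ∑ j ∈ F, f j ∈ nonnegSpan S :=
  Finset.sum_induction f (· ∈ nonnegSpan S) (fun _ _ ha hb => ns_add_mem ha hb)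
    (ns_zero_mem S) h

lemma ns_mono {S T : Set V} (h : S ⊆ T) : nonnegSpan S ⊆ nonnegSpan T := by
  rintro x ⟨k, c, v, h1, h2, rfl⟩
  exact ⟨k, c, v, h1, fun t => h (h2 t), rfl⟩

lemma ns_span_le {S T : Set V} (h : S ⊆ nonnegSpan T) : nonnegSpan S ⊆ nonnegSpan T := by
  rintro x ⟨k, c, v, h1, h2, rfl⟩
  exact ns_sum_mem _ _ (fun t _ => ns_smul_mem (h1 t) (h (h2 t)))

end NS

lemma stdb_smul (n : ℕ) (p : Fin (n+1)) (c : ℝ) : c • stdb n p = Pi.single p c := by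
  funext t
  by_cases h : t = p <;> simp [stdb, Pi.single_apply, h]

lemma Tmap_pair (n : ℕ) (coef : Fin (n+1) → ℝ) (p q : Fin (n+1)) (hpq : p ≠ q) :
    (fun r : Fin (n+1) => coef r * (stdb n p + stdb n q) r)
      = Pi.single p (coef p) + Pi.single q (coef q) := by
  funext r
  by_cases hp : r = p
  · subst hp
    simp [stdb, Pi.single_apply, hpq, Ne.symm hpq]
  · by_cases hq : r = q
    · subst hq
      simp [stdb, Pi.single_apply, hp]
    · simp [stdb, Pi.single_apply, hp, hq]

lemma choose_id (m k : ℕ) (hm : 1 ≤ m) (hk : k ≤ m) :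
    m * (m - 1).choose k = (m - k) * m.choose k := by
  have h1 := Nat.add_one_mul_choose_eq (m - 1) k
  have h2 := Nat.choose_succ_right_eq m k
  have hs : m - 1 + 1 = m := by omega
  rw [hs] at h1
  rw [h1, h2, Nat.mul_comm]

lemma keybinom (i s j : ℕ) (hji : j < i) (hjs : j ≤ s) (hsi : s ≤ i) :
    ((i : ℝ) - j) * ((i - (j+1)).choose (i - s) : ℝ)
      = ((s : ℝ) - j) * ((i - j).choose (i - s) : ℝ) := by
  have hN : (i - j) * ((i - (j+1)).choose (i - s))
      = (s - j) * ((i - j).choose (i - s)) := by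
    have h3 := choose_id (i - j) (i - s) (by omega) (by omega)
    have h1 : i - j - 1 = i - (j+1) := by omega
    have h2 : (i - j) - (i - s) = s - j := by omega
    rw [h1, h2] at h3
    exact h3
  have h := congrArg (fun t : ℕ => (t : ℝ)) hN
  push_cast [Nat.cast_sub (show j ≤ i by omega), Nat.cast_sub (show j ≤ s by omega)] at h
  exact h

def Gset (n M i : ℕ) : Set (Fin (n+1) → ℝ) :=
  { x | ∃ j : ℕ, ∃ _ : i - M - n + 1 ≤ j, ∃ hj : j ≤ n,
      x = ((i : ℝ) - j - M + 1) • stdb n ⟨j, Nat.lt_succ_of_le (by omega)⟩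
            + ((i : ℝ) - j + 1) • stdb n ⟨j - 1, Nat.lt_succ_of_le (by omega)⟩
      ∨ x = (n : ℝ) • stdb n ⟨j, Nat.lt_succ_of_le (by omega)⟩
            + ((i : ℝ) - j + 1) • stdb n ⟨j - 1, Nat.lt_succ_of_le (by omega)⟩ }

set_option maxHeartbeats 1000000 in
lemma core1 (n M i s j : ℕ) (hn : 2 ≤ n) (hM : n ≤ M) (hi1 : M + n ≤ i)
    (hi2 : i ≤ M + 2 * n - 1) (hs1 : i - M ≤ s) (hs2 : s ≤ 2 * n - 1)
    (hj1 : s - n ≤ j) (hj2 : j ≤ n - 1) :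
    Pi.single (⟨j + 1, by omega⟩ : Fin (n+1)) (((i - (j+1)).choose (i - s) : ℝ))
      + Pi.single (⟨j, by omega⟩ : Fin (n+1)) (((i - j).choose (i - s) : ℝ))
      ∈ nonnegSpan (Gset n M i) := by
  have hsn : n ≤ s := by omega
  have hji : j + 1 + n ≤ i := by omega
  have hsj : j ≤ s := by omega
  have hsjn : s ≤ j + n := by omega
  have hsi : s ≤ i := by omega
  have hiMnj : i ≤ M + n + j := by omega
  have hkey := keybinom i s j (by omega) (by omega) (by omega)
  set c1 : ℝ := ((i - (j+1)).choose (i - s) : ℝ) with hc1def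
  set c2 : ℝ := ((i - j).choose (i - s) : ℝ) with hc2def
  have hc2pos : 0 < c2 := by
    rw [hc2def]
    exact_mod_cast Nat.choose_pos (by omega : i - s ≤ i - j)
  have hm : (0:ℝ) < (i : ℝ) - j := by
    have : (j:ℝ) < (i:ℝ) := by exact_mod_cast (show j < i by omega)
    linarith
  -- the two generators at index j+1
  have hA : ((i : ℝ) - (j+1 : ℕ) - M + 1) • stdb n ⟨j+1, by omega⟩
      + ((i : ℝ) - (j+1 : ℕ) + 1) • stdb n ⟨(j+1) - 1, by omega⟩ ∈ Gset n M i :=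
    ⟨j+1, by omega, by omega, Or.inl rfl⟩
  have hB : (n : ℝ) • stdb n ⟨j+1, by omega⟩
      + ((i : ℝ) - (j+1 : ℕ) + 1) • stdb n ⟨(j+1) - 1, by omega⟩ ∈ Gset n M i :=
    ⟨j+1, by omega, by omega, Or.inr rfl⟩
  simp only [Nat.add_sub_cancel] at hA hB
  push_cast at hA hB
  set p : Fin (n+1) := ⟨j+1, by omega⟩
  set q : Fin (n+1) := ⟨j, by omega⟩
  by_cases hcase : i = M + n + j
  · -- degenerate case: the two generators coincide up to the relevant ray
    have hseq : s = n + j := by omega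
    have hiR : (i:ℝ) = (M:ℝ) + n + j := by exact_mod_cast congrArg (fun t : ℕ => (t:ℝ)) hcase
    have hsR : (s:ℝ) = (n:ℝ) + j := by exact_mod_cast congrArg (fun t : ℕ => (t:ℝ)) hseq
    have e1 : c1 = (c2 / ((i:ℝ) - j)) * ((i:ℝ) - ((j:ℝ) + 1) - M + 1) := by
      rw [div_mul_eq_mul_div, eq_comm, div_eq_iff (ne_of_gt hm)]
      linear_combination - hkey + c2 * hiR - c2 * hsR
    have e2 : c2 = (c2 / ((i:ℝ) - j)) * ((i:ℝ) - ((j:ℝ) + 1) + 1) := by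
      rw [div_mul_eq_mul_div, eq_comm, div_eq_iff (ne_of_gt hm)]
      ring
    have hveq : Pi.single p c1 + Pi.single q c2
        = (c2 / ((i:ℝ) - j)) • (((i:ℝ) - ((j:ℝ) + 1) - M + 1) • stdb n p
            + ((i:ℝ) - ((j:ℝ) + 1) + 1) • stdb n q) := by
      rw [← stdb_smul n p c1, ← stdb_smul n q c2]
      linear_combination (norm := module) e1 • stdb n p + e2 • stdb n q
    rw [hveq]
    exact ns_smul_mem (by positivity) (ns_subset _ hA)
  · -- generic case: combination of the two rays
    have hD : (0:ℝ) < (M:ℝ) + n + j - i := by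
      have : (i:ℝ) < (M:ℝ) + n + j := by exact_mod_cast (show i < M + n + j by omega)
      linarith
    have hmD : ((i:ℝ) - j) * ((M:ℝ) + n + j - i) ≠ 0 := ne_of_gt (mul_pos hm hD)
    set α : ℝ := c2 * ((n:ℝ) - ((s:ℝ) - j)) / (((i:ℝ) - j) * ((M:ℝ) + n + j - i)) with hadef
    set β : ℝ := c2 * ((s:ℝ) + M - i) / (((i:ℝ) - j) * ((M:ℝ) + n + j - i)) with hbdef
    have hα : 0 ≤ α := by
      rw [hadef]
      apply div_nonneg _ (le_of_lt (mul_pos hm hD))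
      apply mul_nonneg (le_of_lt hc2pos)
      have : (s:ℝ) ≤ (j:ℝ) + n := by exact_mod_cast hsjn
      linarith
    have hβ : 0 ≤ β := by
      rw [hbdef]
      apply div_nonneg _ (le_of_lt (mul_pos hm hD))
      apply mul_nonneg (le_of_lt hc2pos)
      have : (i:ℝ) ≤ (s:ℝ) + M := by exact_mod_cast (show i ≤ s + M by omega)
      linarith
    have e1 : c1 = α * ((i:ℝ) - ((j:ℝ) + 1) - M + 1) + β * (n:ℝ) := by
      rw [hadef, hbdef,
        show c2 * ((n:ℝ) - ((s:ℝ) - j)) / (((i:ℝ) - j) * ((M:ℝ) + n + j - i))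
              * ((i:ℝ) - ((j:ℝ) + 1) - M + 1)
            + c2 * ((s:ℝ) + M - i) / (((i:ℝ) - j) * ((M:ℝ) + n + j - i)) * (n:ℝ)
          = (c2 * ((n:ℝ) - ((s:ℝ) - j)) * ((i:ℝ) - ((j:ℝ) + 1) - M + 1)
              + c2 * ((s:ℝ) + M - i) * (n:ℝ)) / (((i:ℝ) - j) * ((M:ℝ) + n + j - i))
          from by ring,
        eq_comm, div_eq_iff hmD]
      linear_combination (-((M:ℝ) + n + j - i)) * hkey
    have e2 : c2 = α * ((i:ℝ) - ((j:ℝ) + 1) + 1) + β * ((i:ℝ) - ((j:ℝ) + 1) + 1) := by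
      rw [hadef, hbdef,
        show c2 * ((n:ℝ) - ((s:ℝ) - j)) / (((i:ℝ) - j) * ((M:ℝ) + n + j - i))
              * ((i:ℝ) - ((j:ℝ) + 1) + 1)
            + c2 * ((s:ℝ) + M - i) / (((i:ℝ) - j) * ((M:ℝ) + n + j - i))
              * ((i:ℝ) - ((j:ℝ) + 1) + 1)
          = (c2 * ((n:ℝ) - ((s:ℝ) - j)) * ((i:ℝ) - ((j:ℝ) + 1) + 1)
              + c2 * ((s:ℝ) + M - i) * ((i:ℝ) - ((j:ℝ) + 1) + 1))
              / (((i:ℝ) - j) * ((M:ℝ) + n + j - i))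
          from by ring,
        eq_comm, div_eq_iff hmD]
      ring
    have hveq : Pi.single p c1 + Pi.single q c2
        = α • (((i:ℝ) - ((j:ℝ) + 1) - M + 1) • stdb n p + ((i:ℝ) - ((j:ℝ) + 1) + 1) • stdb n q)
          + β • ((n:ℝ) • stdb n p + ((i:ℝ) - ((j:ℝ) + 1) + 1) • stdb n q) := by
      rw [← stdb_smul n p c1, ← stdb_smul n q c2]
      linear_combination (norm := module) e1 • stdb n p + e2 • stdb n q
    rw [hveq]
    exact ns_add_mem (ns_smul_mem hα (ns_subset _ hA)) (ns_smul_mem hβ (ns_subset _ hB))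

lemma key1 (n M i : ℕ) (hn : 2 ≤ n) (hM : n ≤ M) (hi1 : M + n ≤ i)
    (hi2 : i ≤ M + 2 * n - 1) :
    (⋃ s ∈ Set.Icc (i - M) (2 * n - 1),
      (fun y : Fin (n + 1) → ℝ => fun j : Fin (n + 1) =>
          ((i - (j : ℕ)).choose (i - s) : ℝ) * y j) ''
        nonnegSpan { x | ∃ j : ℕ, ∃ _ : s - n ≤ j, ∃ _ : j ≤ n - 1,
          x = stdb n ⟨j + 1, Nat.succ_lt_succ (by omega)⟩ + stdb n ⟨j, Nat.lt_succ_of_le (by omega)⟩ })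
      ⊆ nonnegSpan (Gset n M i) := by
  intro z hz
  simp only [Set.mem_iUnion, Set.mem_image, Set.mem_Icc] at hz
  obtain ⟨s, ⟨hs1, hs2⟩, y, hy, rfl⟩ := hz
  obtain ⟨k, c, v, hc, hv, rfl⟩ := hy
  have hexp : (fun r : Fin (n+1) => ((i - (r:ℕ)).choose (i - s) : ℝ) * (∑ t, c t • v t) r)
      = ∑ t, c t • (fun r : Fin (n+1) => ((i - (r:ℕ)).choose (i - s) : ℝ) * v t r) := by
    funext r
    simp only [Finset.sum_apply, Pi.smul_apply, smul_eq_mul, Finset.mul_sum]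
    exact Finset.sum_congr rfl fun t _ => by ring
  show (fun r : Fin (n+1) => ((i - (r:ℕ)).choose (i - s) : ℝ) * (∑ t, c t • v t) r)
      ∈ nonnegSpan (Gset n M i)
  rw [hexp]
  apply ns_sum_mem
  intro t _
  obtain ⟨jt, hjt1, hjt2, hvt⟩ := hv t
  rw [hvt]
  have hne : (⟨jt + 1, by omega⟩ : Fin (n+1)) ≠ ⟨jt, by omega⟩ :=
    Fin.ne_of_val_ne (by simp)
  rw [Tmap_pair n _ _ _ hne]
  exact ns_smul_mem (hc t) (core1 n M i s jt hn hM hi1 hi2 hs1 hs2 hjt1 hjt2)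

lemma key2 (n M i : ℕ) (hn : 2 ≤ n) (hM : n ≤ M) (hi1 : M + n ≤ i)
    (hi2 : i ≤ M + 2 * n - 1) :
    Gset n M i ⊆ nonnegSpan (⋃ s ∈ Set.Icc (i - M) (2 * n - 1),
      (fun y : Fin (n + 1) → ℝ => fun j : Fin (n + 1) =>
          ((i - (j : ℕ)).choose (i - s) : ℝ) * y j) ''
        nonnegSpan { x | ∃ j : ℕ, ∃ _ : s - n ≤ j, ∃ _ : j ≤ n - 1,
          x = stdb n ⟨j + 1, Nat.succ_lt_succ (by omega)⟩ + stdb n ⟨j, Nat.lt_succ_of_le (by omega)⟩ }) := by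
  rintro x ⟨J, hJ1, hJn, hx⟩
  obtain ⟨j, rfl⟩ : ∃ j, J = j + 1 := ⟨J - 1, by omega⟩
  have hjn : j + 1 ≤ n := hJn
  have hji : j < i := by omega
  have hw : ∀ s : ℕ, i - M ≤ s → s ≤ 2*n - 1 → s - n ≤ j →
      (fun r : Fin (n+1) => ((i - (r:ℕ)).choose (i - s) : ℝ)
          * ((stdb n ⟨j + 1, by omega⟩ + stdb n ⟨j, by omega⟩) r))
        ∈ (⋃ s ∈ Set.Icc (i - M) (2 * n - 1),
          (fun y : Fin (n + 1) → ℝ => fun j : Fin (n + 1) =>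
              ((i - (j : ℕ)).choose (i - s) : ℝ) * y j) ''
            nonnegSpan { x | ∃ j : ℕ, ∃ _ : s - n ≤ j, ∃ _ : j ≤ n - 1,
              x = stdb n ⟨j + 1, Nat.succ_lt_succ (by omega)⟩ + stdb n ⟨j, Nat.lt_succ_of_le (by omega)⟩ }) := by
    intro s h1 h2 h3
    simp only [Set.mem_iUnion, Set.mem_image, Set.mem_Icc]
    exact ⟨s, ⟨h1, h2⟩, stdb n ⟨j + 1, by omega⟩ + stdb n ⟨j, by omega⟩,
      ns_subset _ ⟨j, h3, by omega, rfl⟩, rfl⟩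
  have hne : (⟨j + 1, by omega⟩ : Fin (n+1)) ≠ ⟨j, by omega⟩ :=
    Fin.ne_of_val_ne (by simp)
  set p : Fin (n+1) := ⟨j + 1, by omega⟩
  set q : Fin (n+1) := ⟨j, by omega⟩
  rcases hx with hx | hx
  · -- first generator: use s = i - M
    set s : ℕ := i - M with hsdef
    have h1 : i - M ≤ s := le_refl _
    have h2 : s ≤ 2*n - 1 := by omega
    have h3 : s - n ≤ j := by omega
    have hsi : s ≤ i := by omega
    have hjs : j ≤ s := by omega
    have hkey := keybinom i s j hji hjs hsi
    set c1 : ℝ := ((i - (j+1)).choose (i - s) : ℝ) with hc1def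
    set c2 : ℝ := ((i - j).choose (i - s) : ℝ) with hc2def
    have hc2pos : 0 < c2 := by
      rw [hc2def]
      exact_mod_cast Nat.choose_pos (by omega : i - s ≤ i - j)
    have hm : (0:ℝ) < (i : ℝ) - j := by
      have : (j:ℝ) < (i:ℝ) := by exact_mod_cast hji
      linarith
    have hsR : (s:ℝ) = (i:ℝ) - M := by
      rw [hsdef]
      push_cast [Nat.cast_sub (show M ≤ i by omega)]
      ring
    have hγ : 0 ≤ ((i:ℝ) - j) / c2 := div_nonneg (le_of_lt hm) (le_of_lt hc2pos)
    have eA1 : (i:ℝ) - (↑(j+1):ℝ) - M + 1 = (((i:ℝ) - j) / c2) * c1 := by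
      rw [div_mul_eq_mul_div, eq_comm, div_eq_iff (ne_of_gt hc2pos)]
      push_cast
      linear_combination hkey + c2 * hsR
    have eA2 : (i:ℝ) - (↑(j+1):ℝ) + 1 = (((i:ℝ) - j) / c2) * c2 := by
      rw [div_mul_cancel₀ _ (ne_of_gt hc2pos)]
      push_cast
      ring
    have hveq : x = (((i:ℝ) - j) / c2) •
        (fun r : Fin (n+1) => ((i - (r:ℕ)).choose (i - s) : ℝ) * ((stdb n p + stdb n q) r)) := by
      rw [Tmap_pair n _ _ _ hne]
      show x = (((i:ℝ) - j) / c2) • (Pi.single p ((i - (p:ℕ)).choose (i-s) : ℝ)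
        + Pi.single q ((i - (q:ℕ)).choose (i-s) : ℝ))
      rw [hx]
      simp only [Nat.add_sub_cancel]
      rw [show ((i - (p:ℕ)).choose (i-s) : ℝ) = c1 from rfl,
        show ((i - (q:ℕ)).choose (i-s) : ℝ) = c2 from rfl,
        ← stdb_smul n p c1, ← stdb_smul n q c2]
      linear_combination (norm := module) eA1 • stdb n p + eA2 • stdb n q
    rw [hveq]
    exact ns_smul_mem hγ (ns_subset _ (hw s h1 h2 h3))
  · -- second generator: use s = j + n
    set s : ℕ := j + n with hsdef
    have h1 : i - M ≤ s := by omega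
    have h2 : s ≤ 2*n - 1 := by omega
    have h3 : s - n ≤ j := by omega
    have hsi : s ≤ i := by omega
    have hjs : j ≤ s := by omega
    have hkey := keybinom i s j hji hjs hsi
    set c1 : ℝ := ((i - (j+1)).choose (i - s) : ℝ) with hc1def
    set c2 : ℝ := ((i - j).choose (i - s) : ℝ) with hc2def
    have hc2pos : 0 < c2 := by
      rw [hc2def]
      exact_mod_cast Nat.choose_pos (by omega : i - s ≤ i - j)
    have hm : (0:ℝ) < (i : ℝ) - j := by
      have : (j:ℝ) < (i:ℝ) := by exact_mod_cast hji
      linarith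
    have hsR : (s:ℝ) = (j:ℝ) + n := by
      rw [hsdef]; push_cast; ring
    have hγ : 0 ≤ ((i:ℝ) - j) / c2 := div_nonneg (le_of_lt hm) (le_of_lt hc2pos)
    have eB1 : (n:ℝ) = (((i:ℝ) - j) / c2) * c1 := by
      rw [div_mul_eq_mul_div, eq_comm, div_eq_iff (ne_of_gt hc2pos)]
      linear_combination hkey + c2 * hsR
    have eB2 : (i:ℝ) - (↑(j+1):ℝ) + 1 = (((i:ℝ) - j) / c2) * c2 := by
      rw [div_mul_cancel₀ _ (ne_of_gt hc2pos)]
      push_cast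
      ring
    have hveq : x = (((i:ℝ) - j) / c2) •
        (fun r : Fin (n+1) => ((i - (r:ℕ)).choose (i - s) : ℝ) * ((stdb n p + stdb n q) r)) := by
      rw [Tmap_pair n _ _ _ hne]
      show x = (((i:ℝ) - j) / c2) • (Pi.single p ((i - (p:ℕ)).choose (i-s) : ℝ)
        + Pi.single q ((i - (q:ℕ)).choose (i-s) : ℝ))
      rw [hx]
      simp only [Nat.add_sub_cancel]
      rw [show ((i - (p:ℕ)).choose (i-s) : ℝ) = c1 from rfl,
        show ((i - (q:ℕ)).choose (i-s) : ℝ) = c2 from rfl,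
        ← stdb_smul n p c1, ← stdb_smul n q c2]
      linear_combination (norm := module) eB1 • stdb n p + eB2 • stdb n q
    rw [hveq]
    exact ns_smul_mem hγ (ns_subset _ (hw s h1 h2 h3))

/-- Let `n, M, i` be integers with `n ≥ 2`, `M ≥ n` and `M+n ≤ i ≤ M+2n−1`.  With
`u₀, …, uₙ` the standard basis of `ℝ^{n+1}`, set
`D_s = cone{u_{j+1} + u_j : s−n ≤ j ≤ n−1}` for `n ≤ s ≤ 2n−1`, and let `T_s` be the
diagonal map multiplying the `j`-th coordinate by `C(i−j, i−s)`.  Then the convex cone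
generated by the union of the `T_s(D_s)` over `i−M ≤ s ≤ 2n−1` equals the sum, over
integers `j` with `i−M−n+1 ≤ j ≤ n`, of the cones
`cone{(i−j−M+1)·u_j + (i−j+1)·u_{j−1}, n·u_j + (i−j+1)·u_{j−1}}`. -/
theorem stmt_14 (n M i : ℕ) (hn : 2 ≤ n) (hM : n ≤ M)
    (hi1 : M + n ≤ i) (hi2 : i ≤ M + 2 * n - 1) :
    nonnegSpan (⋃ s ∈ Set.Icc (i - M) (2 * n - 1),
      (fun y : Fin (n + 1) → ℝ => fun j : Fin (n + 1) =>
          ((i - (j : ℕ)).choose (i - s) : ℝ) * y j) ''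
        nonnegSpan { x | ∃ j : ℕ, ∃ _ : s - n ≤ j, ∃ _ : j ≤ n - 1,
          x = stdb n ⟨j + 1, by omega⟩ + stdb n ⟨j, by omega⟩ })
      = { x : Fin (n + 1) → ℝ | ∃ f : ℕ → (Fin (n + 1) → ℝ),
          (∀ j, i - M - n + 1 ≤ j → ∀ hj : j ≤ n,
            f j ∈ nonnegSpan
              {((i : ℝ) - j - M + 1) • stdb n ⟨j, by omega⟩
                  + ((i : ℝ) - j + 1) • stdb n ⟨j - 1, by omega⟩,
                (n : ℝ) • stdb n ⟨j, by omega⟩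
                  + ((i : ℝ) - j + 1) • stdb n ⟨j - 1, by omega⟩}) ∧
          x = ∑ j ∈ Finset.Icc (i - M - n + 1) n, f j } := by
  apply Set.Subset.antisymm
  · -- forward inclusion
    intro x hx
    have hxG : x ∈ nonnegSpan (Gset n M i) :=
      ns_span_le (key1 n M i hn hM hi1 hi2) hx
    obtain ⟨k, c, v, hc, hv, rfl⟩ := hxG
    apply Finset.sum_induction
    · -- closed under addition
      rintro a b ⟨fa, hfa, rfl⟩ ⟨fb, hfb, rfl⟩
      refine ⟨fa + fb, fun j h1 h2 => ns_add_mem (hfa j h1 h2) (hfb j h1 h2), ?_⟩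
      simp [Finset.sum_add_distrib]
    · -- contains zero
      exact ⟨fun _ => 0, fun j h1 h2 => ns_zero_mem _, by simp⟩
    · -- each term
      intro t _
      obtain ⟨J, hJ1, hJn, hOr⟩ := hv t
      refine ⟨fun j' => if j' = J then c t • v t else 0, ?_, ?_⟩
      · intro j' h1 h2
        show (if j' = J then c t • v t else 0) ∈ _
        by_cases hj' : j' = J
        · subst hj'
          rw [if_pos rfl]
          apply ns_smul_mem (hc t)
          apply ns_subset
          rcases hOr with h | h
          · rw [h]; exact Set.mem_insert _ _
          · rw [h]; exact Set.mem_insert_of_mem _ rfl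
        · rw [if_neg hj']
          exact ns_zero_mem _
      · show c t • v t = ∑ j' ∈ Finset.Icc (i - M - n + 1) n,
            if j' = J then c t • v t else 0
        rw [Finset.sum_ite_eq' (Finset.Icc (i - M - n + 1) n) J
            (fun _ => c t • v t), if_pos (Finset.mem_Icc.mpr ⟨hJ1, hJn⟩)]
  · -- reverse inclusion
    rintro x ⟨f, hf, rfl⟩
    apply ns_span_le (key2 n M i hn hM hi1 hi2)
    apply ns_sum_mem
    intro j hj
    rw [Finset.mem_Icc] at hj
    refine ns_span_le ?_ (hf j hj.1 hj.2)
    intro y hy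
    apply ns_subset
    simp only [Set.mem_insert_iff, Set.mem_singleton_iff] at hy
    exact ⟨j, hj.1, hj.2, hy⟩
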